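/- Let M be an inverse monoid generated by X with presentation map θ, and let Sch^L(M,X) be the left Schützenberger graph: vertices M, and an x-labelled edge from s to (xθ)s whenever (x⁻¹x)θ ≥ ss⁻¹. Define M-actions on the cellular chain groups C₀ and C₁ by s ◁ t = st and (x,s) ◁ t = (x,st). Then the boundary map ∂ : C₁(Sch^L(M,X)) → C₀(Sch^L(M,X)), (x,s) ↦ (xθ)s − s, is a morphism of M-modules, and its kernel H₁(Sch^L(M,X)) = ⊔_{e∈E(M)} H₁(Sch^L(M,X,e)) is an M-module. -/

import Mathlib

/-- An inverse monoid. -/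
class InverseMonoid (M : Type*) extends Monoid M, Inv M where
  mul_inv_mul : ∀ a : M, a * a⁻¹ * a = a
  inv_mul_inv : ∀ a : M, a⁻¹ * a * a⁻¹ = a⁻¹
  idem_comm : ∀ e f : M, e * e = e → f * f = f → e * f = f * e

/-- The edge set of the left Schützenberger graph `Sch^L(M,X)`: pairs `(x, s)` with
`(x⁻¹x)θ ≥ ss⁻¹` in the natural order (for idempotents, `e ≥ f` iff `f * e = f`),
where `gen x = xθ`. -/
def SchEdges {M X : Type*} [InverseMonoid M] (gen : X → M) : Type _ :=
  {p : X × M // (p.2 * p.2⁻¹) * ((gen p.1)⁻¹ * gen p.1) = p.2 * p.2⁻¹}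

/-- The boundary map `∂ : C₁ → C₀`, `(x,s) ↦ (xθ)s − s`, on cellular chains. -/
noncomputable def schBoundary {M X : Type*} [InverseMonoid M] (gen : X → M) :
    (SchEdges gen →₀ ℤ) →ₗ[ℤ] (M →₀ ℤ) :=
  Finsupp.lift (M →₀ ℤ) ℤ (SchEdges gen)
    (fun p => Finsupp.single (gen p.1.1 * p.1.2) 1 - Finsupp.single p.1.2 1)

/-- The `M`-action on `C₀`, induced by `s ◁ t = st`. -/
noncomputable def actC0 {M X : Type*} [InverseMonoid M] (gen : X → M) (t : M) :
    (M →₀ ℤ) →ₗ[ℤ] (M →₀ ℤ) :=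
  Finsupp.lmapDomain ℤ ℤ (fun s : M => s * t)

/-- The `M`-action on `C₁`, induced by an action `(x,s) ◁ t = (x, st)` on edges. -/
noncomputable def actC1 {M X : Type*} [InverseMonoid M] (gen : X → M)
    (actE : M → SchEdges gen → SchEdges gen) (t : M) :
    (SchEdges gen →₀ ℤ) →ₗ[ℤ] (SchEdges gen →₀ ℤ) :=
  Finsupp.lmapDomain ℤ ℤ (actE t)

section
variable {M : Type*} [InverseMonoid M]

lemma im_inv_unique {a b c : M} (hb1 : a * b * a = a) (hb2 : b * a * b = b)
    (hc1 : a * c * a = a) (hc2 : c * a * c = c) : b = c := by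
  have hab : (a * b) * (a * b) = a * b := by
    calc (a * b) * (a * b) = (a * b * a) * b := by simp [mul_assoc]
    _ = a * b := by rw [hb1]
  have hac : (a * c) * (a * c) = a * c := by
    calc (a * c) * (a * c) = (a * c * a) * c := by simp [mul_assoc]
    _ = a * c := by rw [hc1]
  have hba : (b * a) * (b * a) = b * a := by
    calc (b * a) * (b * a) = (b * (a * b * a)) := by simp [mul_assoc]
    _ = b * a := by rw [hb1]
  have hca : (c * a) * (c * a) = c * a := by
    calc (c * a) * (c * a) = (c * (a * c * a)) := by simp [mul_assoc]
    _ = c * a := by rw [hc1]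
  have h1 : b = c * a * b := by
    calc b = b * a * b := hb2.symm
    _ = b * (a * c * a) * b := by rw [hc1]
    _ = (b * a) * (c * a) * b := by simp [mul_assoc]
    _ = (c * a) * (b * a) * b := by rw [InverseMonoid.idem_comm _ _ hba hca]
    _ = c * (a * (b * (a * b))) := by simp [mul_assoc]
    _ = c * (a * b) := by rw [show a * (b * (a * b)) = (a * b * a) * b by simp [mul_assoc], hb1]
    _ = c * a * b := by rw [mul_assoc]
  have h2 : c = c * a * b := by
    calc c = c * a * c := hc2.symm
    _ = c * (a * b * a) * c := by rw [hb1]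
    _ = c * ((a * b) * (a * c)) := by simp [mul_assoc]
    _ = c * ((a * c) * (a * b)) := by rw [InverseMonoid.idem_comm _ _ hab hac]
    _ = (c * a * c) * (a * b) := by simp [mul_assoc]
    _ = c * (a * b) := by rw [hc2]
    _ = c * a * b := by rw [mul_assoc]
  rw [h1, ← h2]

lemma im_mul_inv_rev (s t : M) : (s * t)⁻¹ = t⁻¹ * s⁻¹ := by
  have hss : (s⁻¹ * s) * (s⁻¹ * s) = s⁻¹ * s := by
    calc (s⁻¹ * s) * (s⁻¹ * s) = (s⁻¹ * (s * s⁻¹ * s)) := by simp [mul_assoc]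
    _ = s⁻¹ * s := by rw [InverseMonoid.mul_inv_mul]
  have htt : (t * t⁻¹) * (t * t⁻¹) = t * t⁻¹ := by
    calc (t * t⁻¹) * (t * t⁻¹) = ((t * t⁻¹ * t) * t⁻¹) := by simp [mul_assoc]
    _ = t * t⁻¹ := by rw [InverseMonoid.mul_inv_mul]
  have hcomm := InverseMonoid.idem_comm _ _ hss htt
  refine im_inv_unique (a := s * t) ?_ ?_ ?_ ?_
  · exact InverseMonoid.mul_inv_mul (s * t)
  · exact InverseMonoid.inv_mul_inv (s * t)
  · calc (s * t) * (t⁻¹ * s⁻¹) * (s * t)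
        = s * ((t * t⁻¹) * (s⁻¹ * s)) * t := by simp [mul_assoc]
    _ = s * ((s⁻¹ * s) * (t * t⁻¹)) * t := by rw [hcomm]
    _ = (s * s⁻¹ * s) * (t * t⁻¹ * t) := by simp [mul_assoc]
    _ = s * t := by rw [InverseMonoid.mul_inv_mul, InverseMonoid.mul_inv_mul]
  · calc (t⁻¹ * s⁻¹) * (s * t) * (t⁻¹ * s⁻¹)
        = t⁻¹ * ((s⁻¹ * s) * (t * t⁻¹)) * s⁻¹ := by simp [mul_assoc]
    _ = t⁻¹ * ((t * t⁻¹) * (s⁻¹ * s)) * s⁻¹ := by rw [hcomm]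
    _ = (t⁻¹ * t * t⁻¹) * (s⁻¹ * s * s⁻¹) := by simp [mul_assoc]
    _ = t⁻¹ * s⁻¹ := by rw [InverseMonoid.inv_mul_inv, InverseMonoid.inv_mul_inv]

end

/-- the boundary map `∂ : C₁(Sch^L(M,X)) → C₀(Sch^L(M,X))`,
`(x,s) ↦ (xθ)s − s`, is a morphism of `M`-modules for the actions `s ◁ t = st` and
`(x,s) ◁ t = (x,st)`, and its kernel `H₁(Sch^L(M,X)) = ⊔_e H₁(Sch^L(M,X,e))` is an
`M`-module (it is invariant under the `M`-action; the components are indexed by the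
idempotents via `s ↦ s⁻¹s`, and the action carries the component at `e` to the
component at `t⁻¹et`). -/
theorem stmt19 {M X : Type*} [InverseMonoid M] (gen : X → M)
    (actE : M → SchEdges gen → SchEdges gen)
    (hactE : ∀ (t : M) (p : SchEdges gen), (actE t p).1 = (p.1.1, p.1.2 * t)) :
    -- ∂ is a morphism of M-modules
    (∀ t : M, (schBoundary gen).comp (actC1 gen actE t) =
      (actC0 gen t).comp (schBoundary gen)) ∧
    -- the kernel H₁ is closed under the M-action, hence an M-module
    (∀ (t : M) (c : SchEdges gen →₀ ℤ), schBoundary gen c = 0 →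
      schBoundary gen (actC1 gen actE t c) = 0) ∧
    -- the grading over E(M) is respected: the action by t carries the component
    -- at e = s⁻¹s to the component at t⁻¹et
    (∀ s t : M, (s * t)⁻¹ * (s * t) = t⁻¹ * (s⁻¹ * s) * t) := by

  have hbound : ∀ (t : M) (c : SchEdges gen →₀ ℤ),
      schBoundary gen (actC1 gen actE t c) = actC0 gen t (schBoundary gen c) := by
    intro t c
    induction c using Finsupp.induction_linear with
    | zero => simp
    | add f g hf hg => simp [map_add, hf, hg]
    | single p n =>
      simp only [actC1, Finsupp.lmapDomain_apply, Finsupp.mapDomain_single,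
        schBoundary, Finsupp.lift_apply]
      rw [Finsupp.sum_single_index (by simp), Finsupp.sum_single_index (by simp)]
      rw [hactE t p, map_smul, map_sub]
      simp [actC0, Finsupp.mapDomain_single, mul_assoc]
  refine ⟨fun t => LinearMap.ext fun c => hbound t c, fun t c hc => by
    rw [hbound, hc, map_zero], fun s t => ?_⟩
  rw [im_mul_inv_rev]
  simp [mul_assoc]
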